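/- Let ζ ≥ 0, let μ and ν be finite ζ-comparable measures on a measurable space X, let W ⊆ X be a measurable set with μ(W) > 0 and ν(W) > 0, and let f be of scaling type σ with f(x) > 0 for all x > 0. Let A, Ã : X × X → Set X be families of measurable subsets of X, and assume that the functions (p,q) ↦ α_μ(A(p,q), Ã(p,q)) and (p,q) ↦ α_ν(A(p,q), Ã(p,q)) are measurable with respect to the product σ-algebra on X × X. Then (1/f(ν(W))) · ∫_{W×W} α_ν(A(p,q), Ã(p,q)) d(ν⊗ν)(p,q) ≤ exp((4+σ)·ζ) · (1/f(μ(W))) · ∫_{W×W} α_μ(A(p,q), Ã(p,q)) d(μ⊗μ)(p,q). -/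

import Mathlib

open MeasureTheory Real

open Classical in
/-- The discrepancy `α_μ(A,B) = μ(A △ B)/μ(A ∪ B)` when `0 < μ (A ∪ B) < ∞`, and `0`
otherwise. -/
noncomputable def disc {X : Type*} [MeasurableSpace X] (μ : Measure X) (A B : Set X) : ℝ :=
  if 0 < μ (A ∪ B) ∧ μ (A ∪ B) < ⊤ then (μ (symmDiff A B)).toReal / (μ (A ∪ B)).toReal else 0

/-- Two measures are `ζ`-comparable if each is bounded by `exp ζ` times the other on all
measurable sets. -/
def Comparable {X : Type*} [MeasurableSpace X] (ζ : ℝ) (μ ν : Measure X) : Prop :=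
  ∀ S : Set X, MeasurableSet S →
    μ S ≤ ENNReal.ofReal (Real.exp ζ) * ν S ∧ ν S ≤ ENNReal.ofReal (Real.exp ζ) * μ S

/-- `f` is of scaling type `σ`: nonnegative and monotone nondecreasing on `[0,∞)`, with
`f (a·x) ≤ a^σ · f x` for all `a ≥ 1` and `x ≥ 0`. -/
def ScalingType (f : ℝ → ℝ) (σ : ℝ) : Prop :=
  (∀ x ≥ (0 : ℝ), 0 ≤ f x) ∧ MonotoneOn f (Set.Ici 0) ∧
    ∀ a ≥ (1 : ℝ), ∀ x ≥ (0 : ℝ), f (a * x) ≤ a ^ σ * f x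

lemma disc_nonneg {X : Type*} [MeasurableSpace X] (μ : Measure X) (A B : Set X) :
    0 ≤ disc μ A B := by
  unfold disc; split
  · positivity
  · exact le_refl 0

lemma disc_le_one {X : Type*} [MeasurableSpace X] (μ : Measure X) (A B : Set X) :
    disc μ A B ≤ 1 := by
  unfold disc; split
  case isTrue h =>
    apply div_le_one_of_le₀
    · exact ENNReal.toReal_mono h.2.ne (measure_mono Set.symmDiff_subset_union)
    · exact ENNReal.toReal_nonneg
  case isFalse => norm_num

lemma disc_comp {X : Type*} [MeasurableSpace X] {ζ : ℝ} (hζ : 0 ≤ ζ)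
    {μ ν : Measure X} [IsFiniteMeasure μ] [IsFiniteMeasure ν]
    (hcomp : Comparable ζ μ ν) {A B : Set X} (hA : MeasurableSet A) (hB : MeasurableSet B) :
    disc ν A B ≤ Real.exp (2 * ζ) * disc μ A B := by
  set c := ENNReal.ofReal (Real.exp ζ) with hc
  have hcne : c ≠ ⊤ := ENNReal.ofReal_ne_top
  have h1 := hcomp (A ∪ B) (hA.union hB)
  have h2 := hcomp (symmDiff A B) (hA.symmDiff hB)
  by_cases hμ : 0 < μ (A ∪ B)
  · have hν : 0 < ν (A ∪ B) := by
      by_contra h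
      push_neg at h
      have : ν (A ∪ B) = 0 := le_antisymm h zero_le
      have := h1.1.trans_eq (by rw [this, mul_zero])
      exact absurd (le_antisymm this zero_le) hμ.ne'
    have hμt : μ (A ∪ B) < ⊤ := measure_lt_top _ _
    have hνt : ν (A ∪ B) < ⊤ := measure_lt_top _ _
    rw [disc, disc, if_pos ⟨hν, hνt⟩, if_pos ⟨hμ, hμt⟩]
    have e1 : (ν (symmDiff A B)).toReal ≤ Real.exp ζ * (μ (symmDiff A B)).toReal := by
      have := h2.2
      have : (ν (symmDiff A B)).toReal ≤ (c * μ (symmDiff A B)).toReal :=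
        ENNReal.toReal_mono (ENNReal.mul_ne_top hcne (measure_ne_top _ _)) this
      rwa [ENNReal.toReal_mul, ENNReal.toReal_ofReal (Real.exp_pos ζ).le] at this
    have e2 : (μ (A ∪ B)).toReal ≤ Real.exp ζ * (ν (A ∪ B)).toReal := by
      have := h1.1
      have : (μ (A ∪ B)).toReal ≤ (c * ν (A ∪ B)).toReal :=
        ENNReal.toReal_mono (ENNReal.mul_ne_top hcne (measure_ne_top _ _)) this
      rwa [ENNReal.toReal_mul, ENNReal.toReal_ofReal (Real.exp_pos ζ).le] at this
    have hb : 0 < (ν (A ∪ B)).toReal := ENNReal.toReal_pos hν.ne' hνt.ne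
    have hd : 0 < (μ (A ∪ B)).toReal := ENNReal.toReal_pos hμ.ne' hμt.ne
    rw [div_le_iff₀ hb]
    have hsd : 0 ≤ (μ (symmDiff A B)).toReal := ENNReal.toReal_nonneg
    have hexp : Real.exp (2 * ζ) = Real.exp ζ * Real.exp ζ := by
      rw [two_mul, Real.exp_add]
    rw [hexp]
    calc (ν (symmDiff A B)).toReal ≤ Real.exp ζ * (μ (symmDiff A B)).toReal := e1
      _ = (Real.exp ζ * (μ (symmDiff A B)).toReal / (μ (A ∪ B)).toReal) * (μ (A ∪ B)).toReal := by
          field_simp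
      _ ≤ (Real.exp ζ * (μ (symmDiff A B)).toReal / (μ (A ∪ B)).toReal) *
            (Real.exp ζ * (ν (A ∪ B)).toReal) := by
          apply mul_le_mul_of_nonneg_left e2
          positivity
      _ = Real.exp ζ * Real.exp ζ * ((μ (symmDiff A B)).toReal / (μ (A ∪ B)).toReal) *
            (ν (A ∪ B)).toReal := by ring
  · have hν0 : ν (A ∪ B) = 0 := by
      have hμ0 : μ (A ∪ B) = 0 := by
        by_contra h; exact hμ (pos_iff_ne_zero.mpr h)
      have := h1.2.trans_eq (by rw [hμ0, mul_zero])
      exact le_antisymm this zero_le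
    rw [disc, disc, if_neg (by simp [hν0]), if_neg (by simp_all)]
    simp

theorem causal_distance_symmetry_estimate {X : Type*} [MeasurableSpace X]
    (ζ σ : ℝ) (hζ : 0 ≤ ζ) (hσ : 1 ≤ σ)
    (μ ν : Measure X) [IsFiniteMeasure μ] [IsFiniteMeasure ν]
    (hcomp : Comparable ζ μ ν)
    (W : Set X) (hW : MeasurableSet W) (hμW : 0 < μ W) (hνW : 0 < ν W)
    (f : ℝ → ℝ) (hf : ScalingType f σ) (hfpos : ∀ x > (0 : ℝ), 0 < f x)
    (A A' : X → X → Set X)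
    (hA : ∀ p q, MeasurableSet (A p q)) (hA' : ∀ p q, MeasurableSet (A' p q))
    (hm1 : Measurable fun pq : X × X => disc μ (A pq.1 pq.2) (A' pq.1 pq.2))
    (hm2 : Measurable fun pq : X × X => disc ν (A pq.1 pq.2) (A' pq.1 pq.2)) :
    (1 / f (ν W).toReal) *
        ∫ pq in W ×ˢ W, disc ν (A pq.1 pq.2) (A' pq.1 pq.2) ∂(ν.prod ν) ≤
      Real.exp ((4 + σ) * ζ) *
        ((1 / f (μ W).toReal) *
          ∫ pq in W ×ˢ W, disc μ (A pq.1 pq.2) (A' pq.1 pq.2) ∂(μ.prod μ)) := by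
  set c := ENNReal.ofReal (Real.exp ζ) with hc
  have hcne : c ≠ ⊤ := ENNReal.ofReal_ne_top
  have hctr : c.toReal = Real.exp ζ := ENNReal.toReal_ofReal (Real.exp_pos ζ).le
  -- measure comparison: ν.prod ν ≤ (c*c) • μ.prod μ
  have hνμ : ν ≤ c • μ := by
    rw [Measure.le_iff]
    intro s hs
    simpa using (hcomp s hs).2
  have hprodle : ν.prod ν ≤ (c * c) • μ.prod μ := by
    rw [Measure.le_iff]
    intro S hS
    rw [Measure.prod_apply hS, Measure.smul_apply, Measure.prod_apply hS, smul_eq_mul]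
    calc ∫⁻ x, ν (Prod.mk x ⁻¹' S) ∂ν
        ≤ ∫⁻ x, c * μ (Prod.mk x ⁻¹' S) ∂ν :=
          lintegral_mono fun x => (hcomp _ (measurable_prodMk_left hS)).2
      _ = c * ∫⁻ x, μ (Prod.mk x ⁻¹' S) ∂ν := lintegral_const_mul' _ _ hcne
      _ ≤ c * ∫⁻ x, μ (Prod.mk x ⁻¹' S) ∂(c • μ) :=
          mul_le_mul_right (lintegral_mono' hνμ le_rfl) _
      _ = c * (c * ∫⁻ x, μ (Prod.mk x ⁻¹' S) ∂μ) := by rw [lintegral_smul_measure, smul_eq_mul]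
      _ = (c * c) * ∫⁻ x, μ (Prod.mk x ⁻¹' S) ∂μ := by ring
  set g : X × X → ℝ := fun pq => disc μ (A pq.1 pq.2) (A' pq.1 pq.2) with hg
  set h : X × X → ℝ := fun pq => disc ν (A pq.1 pq.2) (A' pq.1 pq.2) with hh
  have hrestle : (ν.prod ν).restrict (W ×ˢ W) ≤
      (c * c) • ((μ.prod μ).restrict (W ×ˢ W)) := by
    rw [← Measure.restrict_smul]
    exact Measure.restrict_mono (le_refl _) hprodle
  -- integrability of g w.r.t. the big measure
  have hbig : IsFiniteMeasure ((c * c) • ((μ.prod μ).restrict (W ×ˢ W))) := by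
    constructor
    rw [Measure.smul_apply, smul_eq_mul]
    exact ENNReal.mul_lt_top (ENNReal.mul_ne_top hcne hcne).lt_top (measure_lt_top _ _)
  have hint_big : Integrable g ((c * c) • ((μ.prod μ).restrict (W ×ˢ W))) := by
    apply Integrable.mono' (integrable_const 1) hm1.aestronglyMeasurable
    filter_upwards with x
    rw [Real.norm_eq_abs, abs_of_nonneg (disc_nonneg _ _ _)]
    exact disc_le_one _ _ _
  have hint_g_ν : Integrable g ((ν.prod ν).restrict (W ×ˢ W)) := by
    apply Integrable.mono' (integrable_const 1) hm1.aestronglyMeasurable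
    filter_upwards with x
    rw [Real.norm_eq_abs, abs_of_nonneg (disc_nonneg _ _ _)]
    exact disc_le_one _ _ _
  have hint_h_ν : Integrable h ((ν.prod ν).restrict (W ×ˢ W)) := by
    apply Integrable.mono' (integrable_const 1) hm2.aestronglyMeasurable
    filter_upwards with x
    rw [Real.norm_eq_abs, abs_of_nonneg (disc_nonneg _ _ _)]
    exact disc_le_one _ _ _
  -- step 1: pointwise comparison of discrepancies
  have step1 : ∫ pq in W ×ˢ W, h pq ∂(ν.prod ν) ≤
      Real.exp (2 * ζ) * ∫ pq in W ×ˢ W, g pq ∂(ν.prod ν) := by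
    calc ∫ pq in W ×ˢ W, h pq ∂(ν.prod ν)
        ≤ ∫ pq in W ×ˢ W, Real.exp (2 * ζ) * g pq ∂(ν.prod ν) := by
          apply integral_mono hint_h_ν (hint_g_ν.const_mul _)
          intro pq
          exact disc_comp hζ hcomp (hA pq.1 pq.2) (hA' pq.1 pq.2)
      _ = Real.exp (2 * ζ) * ∫ pq in W ×ˢ W, g pq ∂(ν.prod ν) := by
          rw [integral_const_mul]
  -- step 2: change of measure
  have step2 : ∫ pq in W ×ˢ W, g pq ∂(ν.prod ν) ≤
      Real.exp (2 * ζ) * ∫ pq in W ×ˢ W, g pq ∂(μ.prod μ) := by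
    calc ∫ pq in W ×ˢ W, g pq ∂(ν.prod ν)
        ≤ ∫ pq, g pq ∂((c * c) • ((μ.prod μ).restrict (W ×ˢ W))) := by
          apply integral_mono_measure hrestle _ hint_big
          filter_upwards with x
          exact disc_nonneg _ _ _
      _ = (c * c).toReal * ∫ pq in W ×ˢ W, g pq ∂(μ.prod μ) := by
          rw [integral_smul_measure, smul_eq_mul]
      _ = Real.exp (2 * ζ) * ∫ pq in W ×ˢ W, g pq ∂(μ.prod μ) := by
          rw [ENNReal.toReal_mul, hctr, ← Real.exp_add, two_mul]
  set Iν := ∫ pq in W ×ˢ W, h pq ∂(ν.prod ν) with hIν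
  set Iμ := ∫ pq in W ×ˢ W, g pq ∂(μ.prod μ) with hIμ
  have hIμ_nonneg : 0 ≤ Iμ :=
    integral_nonneg fun pq => disc_nonneg _ _ _
  have hIνle : Iν ≤ Real.exp (4 * ζ) * Iμ := by
    calc Iν ≤ Real.exp (2 * ζ) * (Real.exp (2 * ζ) * Iμ) :=
          step1.trans (mul_le_mul_of_nonneg_left step2 (Real.exp_pos _).le)
      _ = Real.exp (4 * ζ) * Iμ := by
          rw [← mul_assoc, ← Real.exp_add]; ring_nf
  -- step 3: the scaling factor
  set M := (μ W).toReal with hM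
  set N := (ν W).toReal with hN
  have hMpos : 0 < M := ENNReal.toReal_pos hμW.ne' (measure_ne_top _ _)
  have hNpos : 0 < N := ENNReal.toReal_pos hνW.ne' (measure_ne_top _ _)
  have hMN : M ≤ Real.exp ζ * N := by
    have := (hcomp W hW).1
    have h2 : (μ W).toReal ≤ (c * ν W).toReal :=
      ENNReal.toReal_mono (ENNReal.mul_ne_top hcne (measure_ne_top _ _)) this
    rwa [ENNReal.toReal_mul, hctr] at h2
  have hfM : 0 < f M := hfpos M hMpos
  have hfN : 0 < f N := hfpos N hNpos
  have hscale : f M ≤ Real.exp (σ * ζ) * f N := by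
    have hx : (0:ℝ) ≤ Real.exp (-ζ) * M := by positivity
    have h1 : f M ≤ Real.exp ζ ^ σ * f (Real.exp (-ζ) * M) := by
      have := hf.2.2 (Real.exp ζ) (Real.one_le_exp hζ) (Real.exp (-ζ) * M) hx
      have heq : Real.exp ζ * (Real.exp (-ζ) * M) = M := by
        rw [← mul_assoc, ← Real.exp_add]; simp
      rwa [heq] at this
    have h2 : f (Real.exp (-ζ) * M) ≤ f N := by
      apply hf.2.1 hx (le_of_lt hNpos)
      calc Real.exp (-ζ) * M ≤ Real.exp (-ζ) * (Real.exp ζ * N) := by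
            apply mul_le_mul_of_nonneg_left hMN (Real.exp_pos _).le
        _ = N := by rw [← mul_assoc, ← Real.exp_add]; simp
    have hpow : Real.exp ζ ^ σ = Real.exp (σ * ζ) := by
      rw [← Real.exp_mul, mul_comm]
    calc f M ≤ Real.exp ζ ^ σ * f (Real.exp (-ζ) * M) := h1
      _ ≤ Real.exp ζ ^ σ * f N := by
          apply mul_le_mul_of_nonneg_left h2
          positivity
      _ = Real.exp (σ * ζ) * f N := by rw [hpow]
  have hdivle : 1 / f N ≤ Real.exp (σ * ζ) / f M := by
    rw [div_le_div_iff₀ hfN hfM]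
    linarith [hscale]
  -- conclude
  calc (1 / f N) * Iν ≤ (1 / f N) * (Real.exp (4 * ζ) * Iμ) := by
        apply mul_le_mul_of_nonneg_left hIνle
        positivity
    _ ≤ (Real.exp (σ * ζ) / f M) * (Real.exp (4 * ζ) * Iμ) := by
        apply mul_le_mul_of_nonneg_right hdivle
        positivity
    _ = Real.exp ((4 + σ) * ζ) * ((1 / f M) * Iμ) := by
        rw [show (4 + σ) * ζ = σ * ζ + 4 * ζ by ring, Real.exp_add]
        field_simp
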